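/- Let H ∈ ℝ^{N×N} be symmetric positive definite, F ∈ ℝ^{N×n}, G ∈ ℝ^{c×N}, S_u ∈ ℝ^{c×n}, w ∈ ℝ^{c}, x ∈ ℝ^{n}, and set S = S_u + G H⁻¹ F. If y₁, y₂ ∈ ℝ^{c} both satisfy the implicit equation y − (I − G H⁻¹ Gᵀ) r(y) = −(S x + w), where r is the componentwise ReLU, then Gᵀ r(y₁) = Gᵀ r(y₂); consequently the two associated control inputs coincide: −H⁻¹ F x − H⁻¹ Gᵀ r(y₁) = −H⁻¹ F x − H⁻¹ Gᵀ r(y₂). -/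

import Mathlib

open Matrix

/-- Componentwise ReLU (ramp) function. -/
noncomputable def relu {c : ℕ} (v : Fin c → ℝ) : Fin c → ℝ := fun i => max (v i) 0

lemma relu_key (a b : ℝ) :
    0 ≤ (max a 0 - max b 0) * ((a - b) - (max a 0 - max b 0)) := by
  rcases le_total a 0 with ha | ha <;> rcases le_total b 0 with hb | hb <;>
    simp [max_eq_right, max_eq_left, ha, hb] <;> nlinarith

/-- Any two solutions `y₁, y₂` of the implicit equation
`y - (I - G H⁻¹ Gᵀ) r(y) = -(S x + w)` satisfy `Gᵀ r(y₁) = Gᵀ r(y₂)`, hence yield the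
same control input `-H⁻¹ F x - H⁻¹ Gᵀ r(y)`. -/
theorem implicit_eq_solutions_same_control {N n c : ℕ}
    (H : Matrix (Fin N) (Fin N) ℝ) (F : Matrix (Fin N) (Fin n) ℝ)
    (G : Matrix (Fin c) (Fin N) ℝ) (Su : Matrix (Fin c) (Fin n) ℝ)
    (w : Fin c → ℝ) (x : Fin n → ℝ)
    (hH : H.PosDef)
    (S : Matrix (Fin c) (Fin n) ℝ) (hS : S = Su + G * H⁻¹ * F)
    (y₁ y₂ : Fin c → ℝ)
    (hy₁ : y₁ - (1 - G * H⁻¹ * Gᵀ).mulVec (relu y₁) = -(S.mulVec x + w))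
    (hy₂ : y₂ - (1 - G * H⁻¹ * Gᵀ).mulVec (relu y₂) = -(S.mulVec x + w)) :
    Gᵀ.mulVec (relu y₁) = Gᵀ.mulVec (relu y₂) ∧
    -(H⁻¹.mulVec (F.mulVec x)) - H⁻¹.mulVec (Gᵀ.mulVec (relu y₁)) =
      -(H⁻¹.mulVec (F.mulVec x)) - H⁻¹.mulVec (Gᵀ.mulVec (relu y₂)) := by
  set A := G * H⁻¹ * Gᵀ with hA
  set d : Fin c → ℝ := relu y₁ - relu y₂ with hd
  -- from the two equations
  have heq : y₁ - y₂ = d - A.mulVec d := by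
    have h := hy₁.trans hy₂.symm
    have h2 : y₁ - y₂ = (1 - A).mulVec (relu y₁) - (1 - A).mulVec (relu y₂) := by
      have := sub_eq_sub_iff_sub_eq_sub.mp h
      linear_combination this
    rw [h2, ← mulVec_sub, ← hd, sub_mulVec, one_mulVec]
  have key1 : 0 ≤ d ⬝ᵥ (y₁ - y₂ - d) := by
    apply Finset.sum_nonneg
    intro i _
    simpa [hd, relu, Pi.sub_apply, sub_sub_eq_add_sub] using relu_key (y₁ i) (y₂ i)
  have key2 : d ⬝ᵥ A.mulVec d ≤ 0 := by
    have : d ⬝ᵥ (y₁ - y₂ - d) = -(d ⬝ᵥ A.mulVec d) := by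
      rw [heq]
      simp [dotProduct_sub]
    linarith [key1, this.symm ▸ key1]
  have hGd : Gᵀ.mulVec d = 0 := by
    by_contra hne
    have hpd := hH.inv
    have hpos : 0 < (Gᵀ.mulVec d) ⬝ᵥ (H⁻¹.mulVec (Gᵀ.mulVec d)) := by
      have := hpd.dotProduct_mulVec_pos (x := Gᵀ.mulVec d) hne
      simpa using this
    have heq2 : d ⬝ᵥ A.mulVec d = (Gᵀ.mulVec d) ⬝ᵥ (H⁻¹.mulVec (Gᵀ.mulVec d)) := by
      rw [hA, ← mulVec_mulVec, ← mulVec_mulVec, dotProduct_mulVec, ← mulVec_transpose]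
    linarith [heq2 ▸ key2]
  have h1 : Gᵀ.mulVec (relu y₁) = Gᵀ.mulVec (relu y₂) := by
    have : Gᵀ.mulVec (relu y₁) - Gᵀ.mulVec (relu y₂) = 0 := by
      rw [← mulVec_sub]; exact hGd
    exact sub_eq_zero.mp this
  exact ⟨h1, by rw [h1]⟩
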